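/- Let P be a directed set. If P has calibre ω₁ (every uncountable subset of P contains an uncountable bounded subset) or P has calibre ω (every countable subset of P is bounded), then the countable power P^ω, with the coordinatewise order, has calibre (ω₁,ω). In other words, calibre ω₁ and calibre ω each imply powerfully calibre (ω₁,ω). -/
import Mathlib


open Cardinal Set

/-- A directed set has calibre `(ω₁,ω)` if every uncountable subset contains an
infinite subset which is bounded (has an upper bound). -/
def CalibreO1O (P : Type*) [Preorder P] : Prop :=
  ∀ S : Set P, ¬ S.Countable → ∃ T ⊆ S, T.Infinite ∧ BddAbove T

/-- Key refinement step for the calibre `ω₁` case: given an uncountable set of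
functions, we can pass to an uncountable subset whose `n`-th coordinates are
bounded. -/
lemma calibre_step {P : Type*} [PartialOrder P]
    (h1 : ∀ S : Set P, ¬ S.Countable → ∃ T ⊆ S, ¬ T.Countable ∧ BddAbove T)
    (A : Set (ℕ → P)) (hA : ¬ A.Countable) (n : ℕ) :
    ∃ B ⊆ A, ¬ B.Countable ∧ ∃ b, ∀ f ∈ B, f n ≤ b := by
  by_cases hIc : ((fun f : ℕ → P => f n) '' A).Countable
  · have hexists : ¬ ∀ p ∈ (fun f : ℕ → P => f n) '' A, ({f ∈ A | f n = p}).Countable := by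
      intro hall
      apply hA
      have hsub : A ⊆ ⋃ p ∈ (fun f : ℕ → P => f n) '' A, {f ∈ A | f n = p} := by
        intro f hf
        exact mem_biUnion ⟨f, hf, rfl⟩ ⟨hf, rfl⟩
      exact (hIc.biUnion hall).mono hsub
    push_neg at hexists
    obtain ⟨p, hpI, hp⟩ := hexists
    exact ⟨_, sep_subset _ _, hp, p, fun f hf => le_of_eq hf.2⟩
  · obtain ⟨T, hTI, hTunc, b, hb⟩ := h1 _ hIc
    refine ⟨{f ∈ A | f n ∈ T}, sep_subset _ _, ?_, b, fun f hf => hb hf.2⟩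
    intro hc
    apply hTunc
    have hsub : T ⊆ (fun f : ℕ → P => f n) '' {f ∈ A | f n ∈ T} := by
      intro t ht
      obtain ⟨f, hfA, rfl⟩ := hTI ht
      exact ⟨f, ⟨hfA, ht⟩, rfl⟩
    exact (hc.image _).mono hsub

/-- calibre `ω₁` (every uncountable subset has an uncountable
bounded subset) and calibre `ω` (every countable subset is bounded) each imply
that the countable power has calibre `(ω₁,ω)`. -/
theorem calibre_omega1_or_omega_powerfully {P : Type*} [PartialOrder P]
    (hdir : ∀ F : Set P, F.Finite → BddAbove F)
    (h : (∀ S : Set P, ¬ S.Countable → ∃ T ⊆ S, ¬ T.Countable ∧ BddAbove T) ∨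
         (∀ S : Set P, S.Countable → BddAbove S)) :
    CalibreO1O (ℕ → P) := by
  classical
  rcases h with h1 | h2
  · -- calibre ω₁ case
    intro S hS
    -- build a decreasing sequence of uncountable sets
    choose Bf hBsub hBunc b hb using calibre_step h1
    let seq : ℕ → {A : Set (ℕ → P) // ¬ A.Countable} := fun n =>
      Nat.rec ⟨S, hS⟩ (fun n p => ⟨Bf p.1 p.2 n, hBunc p.1 p.2 n⟩) n
    have hseq0 : (seq 0).1 = S := rfl
    have hseq_succ : ∀ n, (seq (n+1)).1 = Bf (seq n).1 (seq n).2 n := fun n => rfl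
    have hstep : ∀ n, (seq (n+1)).1 ⊆ (seq n).1 := by
      intro n
      rw [hseq_succ]
      exact hBsub _ _ _
    have hanti : Antitone (fun n => (seq n).1) :=
      antitone_nat_of_succ_le hstep
    have hbound : ∀ n, ∀ f ∈ (seq (n+1)).1, f n ≤ b (seq n).1 (seq n).2 n := by
      intro n f hf
      rw [hseq_succ] at hf
      exact hb _ _ _ f hf
    -- each seq n is infinite
    have hinf : ∀ n, ((seq n).1).Infinite := by
      intro n hfin
      exact (seq n).2 hfin.countable
    -- pick distinct elements
    have key : ∀ n, ∀ prev : Finset (ℕ → P), ∃ x, x ∈ (seq n).1 ∧ x ∉ prev := by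
      intro n prev
      obtain ⟨x, hx⟩ := ((hinf n).diff prev.finite_toSet).nonempty
      exact ⟨x, hx.1, hx.2⟩
    choose pick hpick1 hpick2 using key
    let G : ℕ → ((ℕ → P) × Finset (ℕ → P)) := fun n =>
      Nat.rec ⟨pick 0 ∅, {pick 0 ∅}⟩
        (fun n p => ⟨pick (n+1) p.2, insert (pick (n+1) p.2) p.2⟩) n
    have hGmem : ∀ n, (G n).1 ∈ (seq n).1 := by
      intro n
      cases n with
      | zero => exact hpick1 0 ∅
      | succ m => exact hpick1 (m+1) (G m).2
    have hGself : ∀ n, (G n).1 ∈ (G n).2 := by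
      intro n
      cases n with
      | zero => exact Finset.mem_singleton_self _
      | succ m => exact Finset.mem_insert_self _ _
    have hGmono : ∀ n, (G n).2 ⊆ (G (n+1)).2 := fun n => Finset.subset_insert _ _
    have hGmono' : ∀ k n, k ≤ n → (G k).2 ⊆ (G n).2 := by
      intro k n hkn
      induction n with
      | zero => simp [Nat.le_zero.mp hkn]
      | succ m ih =>
        rcases Nat.lt_or_ge k (m+1) with hk | hk
        · exact (ih (Nat.lt_succ_iff.mp hk)).trans (hGmono m)
        · have : k = m + 1 := le_antisymm hkn hk
          subst this
          exact Finset.Subset.refl _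
    have hGnot : ∀ n, (G (n+1)).1 ∉ (G n).2 := fun n => hpick2 (n+1) (G n).2
    have hGne : ∀ k n, k < n → (G k).1 ≠ (G n).1 := by
      intro k n hlt heq
      obtain ⟨m, rfl⟩ := Nat.exists_eq_add_of_lt hlt
      have h1' : (G k).1 ∈ (G (k + m)).2 :=
        hGmono' k (k + m) (Nat.le_add_right _ _) (hGself k)
      rw [heq] at h1'
      exact hGnot (k + m) h1'
    have hGinj : Function.Injective (fun n => (G n).1) := by
      intro k n hkn
      simp only at hkn
      rcases lt_trichotomy k n with hlt | heq | hlt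
      · exact absurd hkn (hGne k n hlt)
      · exact heq
      · exact absurd hkn.symm (hGne n k hlt)
    -- the infinite subset
    refine ⟨Set.range (fun n => (G n).1), ?_, ?_, ?_⟩
    · rintro f ⟨n, rfl⟩
      have : (G n).1 ∈ (seq n).1 := hGmem n
      have hsub : (seq n).1 ⊆ (seq 0).1 := hanti (Nat.zero_le n)
      rw [hseq0] at hsub
      exact hsub this
    · exact Set.infinite_range_of_injective hGinj
    · -- bounded above
      -- for each n, bound {G k n : k ≤ n} ∪ {b_n}
      have hfin : ∀ n : ℕ, (insert (b (seq n).1 (seq n).2 n)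
          ((fun k => (G k).1 n) '' (Set.Iic n))).Finite :=
        fun n => ((Set.finite_Iic n).image _).insert _
      choose c hc using fun n => hdir _ (hfin n)
      refine ⟨c, ?_⟩
      rintro f ⟨k, rfl⟩
      intro n
      rcases le_or_gt k n with hkn | hnk
      · exact hc n (Set.mem_insert_of_mem _ ⟨k, hkn, rfl⟩)
      · -- k ≥ n+1, so G k ∈ seq (n+1), hence (G k).1 n ≤ b_n
        have hmem : (G k).1 ∈ (seq (n+1)).1 := hanti hnk (hGmem k)
        exact le_trans (hbound n _ hmem) (hc n (Set.mem_insert _ _))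
  · -- calibre ω case
    intro S hS
    have hSi : S.Infinite := fun hf => hS hf.countable
    let e := hSi.natEmbedding
    refine ⟨Set.range (fun k => (e k : ℕ → P)), ?_, ?_, ?_⟩
    · rintro f ⟨k, rfl⟩; exact (e k).2
    · exact Set.infinite_range_of_injective (fun a b hab => e.injective (Subtype.ext hab))
    · have hTc : (Set.range (fun k => (e k : ℕ → P))).Countable := Set.countable_range _
      choose c hc using fun n => h2 ((fun g : ℕ → P => g n) '' Set.range (fun k => (e k : ℕ → P)))
        (hTc.image _)
      refine ⟨c, ?_⟩
      rintro f hf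
      intro n
      exact hc n ⟨f, hf, rfl⟩
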